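/- arXiv:2508.05854 — 2 statements merged into one kernel-verified Lean document; each statement's English description precedes it below -/
import Mathlib

section
/- For every PSD matrix ρ' indexed by (Fin d_a) × I_{k+1} satisfying ρ' = (I ⊗ Π_{k+1})·ρ'·(I ⊗ Π_{k+1}), there exists a PSD matrix ρ'' indexed by (Fin d_a) × I_k satisfying ρ'' = (I ⊗ Π_k)·ρ''·(I ⊗ Π_k) and PTr_k(ρ'') = PTr_{k+1}(ρ'). (That is, EXT_{k+1} ⊆ EXT_k.) -/
open Matrix
open scoped Kronecker ComplexOrder

noncomputable section

/-- The subspace of symmetric vectors: `ψ (i ∘ π) = ψ i` for every permutation `π`. -/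
def SymSpace (d k : ℕ) : Submodule ℂ ((Fin k → Fin d) → ℂ) where
  carrier := {ψ | ∀ (i : Fin k → Fin d) (π : Equiv.Perm (Fin k)), ψ (i ∘ π) = ψ i}
  add_mem' := by
    intro ψ φ hψ hφ i π
    simp [hψ i π, hφ i π]
  zero_mem' := by intro i π; rfl
  smul_mem' := by
    intro c ψ hψ i π
    simp [hψ i π]

/-- `cons0 b r` is the sequence `b⌢r` sending `0` to `b` and `s+1` to `r s`. -/
def cons0 {d k : ℕ} (b : Fin d) (r : Fin (k - 1) → Fin d) : Fin k → Fin d :=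
  fun s => if h : (s : ℕ) = 0 then b else r ⟨(s : ℕ) - 1, by have := s.isLt; omega⟩

/-- Partial trace over the last `k - 1` factors. -/
def PTr (da d k : ℕ)
    (M : Matrix (Fin da × (Fin k → Fin d)) (Fin da × (Fin k → Fin d)) ℂ) :
    Matrix (Fin da × Fin d) (Fin da × Fin d) ℂ :=
  fun p q => ∑ r : Fin (k - 1) → Fin d, M (p.1, cons0 p.2 r) (q.1, cons0 q.2 r)

end

section Aux

open Matrix

/-- Extend a permutation of `Fin k` to `Fin (k+1)` fixing the last element. -/
def extendPerm {k : ℕ} (π : Equiv.Perm (Fin k)) : Equiv.Perm (Fin (k + 1)) where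
  toFun := fun s => Fin.lastCases (Fin.last k) (fun t => (π t).castSucc) s
  invFun := fun s => Fin.lastCases (Fin.last k) (fun t => (π.symm t).castSucc) s
  left_inv := by
    intro s
    refine Fin.lastCases ?_ ?_ s <;> simp
  right_inv := by
    intro s
    refine Fin.lastCases ?_ ?_ s <;> simp

lemma snoc_comp_extendPerm {d k : ℕ} (i : Fin k → Fin d) (j : Fin d)
    (π : Equiv.Perm (Fin k)) :
    (Fin.snoc i j : Fin (k + 1) → Fin d) ∘ (extendPerm π) = Fin.snoc (i ∘ π) j := by
  funext s
  refine Fin.lastCases ?_ ?_ s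
  · simp [extendPerm]
  · intro t
    simp [extendPerm]

lemma snoc_cons0 {d n : ℕ} (b : Fin d) (r : Fin n → Fin d) (j : Fin d) :
    (Fin.snoc (cons0 b r : Fin (n + 1) → Fin d) j : Fin (n + 2) → Fin d)
      = cons0 b (Fin.snoc r j) := by
  funext s
  refine Fin.lastCases ?_ ?_ s
  · have h : ((Fin.last (n + 1) : Fin (n + 2)) : ℕ) = n + 1 := rfl
    simp only [Fin.snoc_last, cons0, h]
    rw [dif_neg (by omega)]
    have : (⟨n + 1 - 1, by omega⟩ : Fin (n + 1)) = Fin.last n := by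
      ext; simp
    rw [this, Fin.snoc_last]
  · intro t
    simp only [Fin.snoc_castSucc, cons0, Fin.coe_castSucc]
    by_cases ht : (t : ℕ) = 0
    · rw [dif_pos ht, dif_pos ht]
    · rw [dif_neg ht, dif_neg ht]
      have hlt : (t : ℕ) - 1 < n := by have := t.isLt; omega
      have : (⟨(t : ℕ) - 1, by have := t.isLt; omega⟩ : Fin (n + 1))
          = (⟨(t : ℕ) - 1, hlt⟩ : Fin n).castSucc := by
        ext; simp
      rw [this, Fin.snoc_castSucc]

lemma fix_of_mem_range {ι : Type*} [Fintype ι] [DecidableEq ι] (P : Matrix ι ι ℂ)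
    (hP : P * P = P) {v : ι → ℂ} (hv : v ∈ LinearMap.range P.mulVecLin) :
    P.mulVec v = v := by
  obtain ⟨u, rfl⟩ := hv
  simp only [Matrix.mulVecLin_apply, Matrix.mulVec_mulVec, hP]

lemma kron_one_mul_apply {m n : Type*} [Fintype m] [Fintype n] [DecidableEq m] [DecidableEq n]
    (Q : Matrix n n ℂ) (R : Matrix (m × n) (m × n) ℂ) (a : m) (i : n) (c : m × n) :
    (((1 : Matrix m m ℂ) ⊗ₖ Q) * R) (a, i) c = ∑ i', Q i i' * R (a, i') c := by
  rw [Matrix.mul_apply, Fintype.sum_prod_type]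
  rw [Finset.sum_comm]
  simp [Matrix.one_apply, ite_mul, Finset.sum_ite_eq, mul_assoc]

lemma kron_conjT {m n : Type*} [Fintype m] [Fintype n]
    (A : Matrix m m ℂ) (B : Matrix n n ℂ) :
    (A ⊗ₖ B)ᴴ = Aᴴ ⊗ₖ Bᴴ := by
  ext ⟨a, i⟩ ⟨a', i'⟩
  simp [Matrix.conjTranspose_apply, Matrix.kroneckerMap_apply, star_mul']

/-- `snoc` as an equivalence. -/
def snocEquiv' (d n : ℕ) : ((Fin n → Fin d) × Fin d) ≃ (Fin (n + 1) → Fin d) :=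
  ⟨fun p => Fin.snoc p.1 p.2, fun m => (Fin.init m, m (Fin.last n)),
    fun p => by simp, fun m => by simp⟩

lemma psd_sum {ι m : Type*} [Fintype ι] [Fintype m] (f : ι → Matrix m m ℂ)
    (h : ∀ i, (f i).PosSemidef) : (∑ i, f i).PosSemidef :=
  Finset.sum_induction f Matrix.PosSemidef (fun _ _ ha hb => ha.add hb)
    Matrix.PosSemidef.zero (fun i _ => h i)

end Aux

theorem stmt5 (da d k : ℕ) (hda : 0 < da) (hd : 0 < d) (hk : 0 < k)
    (Q' : Matrix (Fin (k + 1) → Fin d) (Fin (k + 1) → Fin d) ℂ)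
    (hQ'H : Q'.IsHermitian) (hQ'idem : Q' * Q' = Q')
    (hQ'range : LinearMap.range Q'.mulVecLin = SymSpace d (k + 1))
    (Q : Matrix (Fin k → Fin d) (Fin k → Fin d) ℂ)
    (hQH : Q.IsHermitian) (hQidem : Q * Q = Q)
    (hQrange : LinearMap.range Q.mulVecLin = SymSpace d k)
    (ρ' : Matrix (Fin da × (Fin (k + 1) → Fin d)) (Fin da × (Fin (k + 1) → Fin d)) ℂ)
    (hρ' : ρ'.PosSemidef)
    (hsym : ρ' = ((1 : Matrix (Fin da) (Fin da) ℂ) ⊗ₖ Q') * ρ' *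
      ((1 : Matrix (Fin da) (Fin da) ℂ) ⊗ₖ Q')) :
    ∃ ρ'' : Matrix (Fin da × (Fin k → Fin d)) (Fin da × (Fin k → Fin d)) ℂ,
      ρ''.PosSemidef ∧
      ρ'' = ((1 : Matrix (Fin da) (Fin da) ℂ) ⊗ₖ Q) * ρ'' *
        ((1 : Matrix (Fin da) (Fin da) ℂ) ⊗ₖ Q) ∧
      PTr da d k ρ'' = PTr da d (k + 1) ρ' := by
  -- the kronecker projections are idempotent
  have hK'idem : ((1 : Matrix (Fin da) (Fin da) ℂ) ⊗ₖ Q') *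
      ((1 : Matrix (Fin da) (Fin da) ℂ) ⊗ₖ Q') = (1 : Matrix (Fin da) (Fin da) ℂ) ⊗ₖ Q' := by
    rw [← Matrix.mul_kronecker_mul, one_mul, hQ'idem]
  have h1 : ((1 : Matrix (Fin da) (Fin da) ℂ) ⊗ₖ Q') * ρ' = ρ' := by
    conv_lhs => rw [hsym, ← mul_assoc, ← mul_assoc, hK'idem]
    exact hsym.symm
  -- slices of columns of ρ' are symmetric
  have hslice : ∀ (a : Fin da) (c : Fin da × (Fin (k + 1) → Fin d)),
      (fun m => ρ' (a, m) c) ∈ SymSpace d (k + 1) := by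
    intro a c
    rw [← hQ'range]
    refine ⟨fun m => ρ' (a, m) c, ?_⟩
    funext m
    rw [Matrix.mulVecLin_apply]
    have := congrFun (congrFun h1 (a, m)) c
    rw [kron_one_mul_apply] at this
    simpa [Matrix.mulVec, dotProduct] using this
  -- define ρ''
  set F : Fin d → (Fin da × (Fin k → Fin d)) → (Fin da × (Fin (k + 1) → Fin d)) :=
    fun j p => (p.1, Fin.snoc p.2 j) with hF
  set ρ'' : Matrix (Fin da × (Fin k → Fin d)) (Fin da × (Fin k → Fin d)) ℂ :=
    ∑ j : Fin d, ρ'.submatrix (F j) (F j) with hρ''def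
  have happ : ∀ p q, ρ'' p q = ∑ j : Fin d, ρ' (p.1, Fin.snoc p.2 j) (q.1, Fin.snoc q.2 j) := by
    intro p q
    rw [hρ''def, Matrix.sum_apply]
    rfl
  have hPSD : ρ''.PosSemidef := by
    rw [hρ''def]
    exact psd_sum _ (fun j => hρ'.submatrix (F j))
  -- slices of columns of ρ'' are symmetric
  have hslice'' : ∀ (a : Fin da) (c : Fin da × (Fin k → Fin d)),
      (fun i => ρ'' (a, i) c) ∈ SymSpace d k := by
    intro a c i π
    simp only [happ]
    refine Finset.sum_congr rfl fun j _ => ?_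
    have := hslice a (c.1, Fin.snoc c.2 j) (Fin.snoc i j) (extendPerm π)
    rw [snoc_comp_extendPerm] at this
    exact this
  -- left absorption
  have hleft : ((1 : Matrix (Fin da) (Fin da) ℂ) ⊗ₖ Q) * ρ'' = ρ'' := by
    ext p c
    obtain ⟨a, i⟩ := p
    rw [kron_one_mul_apply]
    have hmem := hslice'' a c
    rw [← hQrange] at hmem
    have := congrFun (fix_of_mem_range Q hQidem hmem) i
    simpa [Matrix.mulVec, dotProduct] using this
  have hherm : ρ''.IsHermitian := hPSD.1
  have hright : ρ'' * ((1 : Matrix (Fin da) (Fin da) ℂ) ⊗ₖ Q) = ρ'' := by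
    have hKH : ((1 : Matrix (Fin da) (Fin da) ℂ) ⊗ₖ Q)ᴴ
        = (1 : Matrix (Fin da) (Fin da) ℂ) ⊗ₖ Q := by
      rw [kron_conjT, Matrix.conjTranspose_one, hQH.eq]
    calc ρ'' * ((1 : Matrix (Fin da) (Fin da) ℂ) ⊗ₖ Q)
        = (((1 : Matrix (Fin da) (Fin da) ℂ) ⊗ₖ Q) * ρ'')ᴴ := by
          rw [Matrix.conjTranspose_mul, hherm.eq, hKH]
      _ = ρ''ᴴ := by rw [hleft]
      _ = ρ'' := hherm.eq
  refine ⟨ρ'', hPSD, ?_, ?_⟩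
  · rw [hleft, hright]
  · -- partial trace equality
    obtain ⟨n, rfl⟩ : ∃ n, k = n + 1 := ⟨k - 1, by omega⟩
    ext p q
    simp only [PTr]
    have lhs_eq : ∀ r : Fin n → Fin d,
        ρ'' (p.1, cons0 p.2 r) (q.1, cons0 q.2 r)
          = ∑ j : Fin d, ρ' (p.1, cons0 p.2 (Fin.snoc r j)) (q.1, cons0 q.2 (Fin.snoc r j)) := by
      intro r
      rw [happ]
      refine Finset.sum_congr rfl fun j _ => ?_
      rw [snoc_cons0, snoc_cons0]
    show (∑ r : Fin n → Fin d, ρ'' (p.1, cons0 p.2 r) (q.1, cons0 q.2 r))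
      = ∑ r : Fin (n + 1) → Fin d, ρ' (p.1, cons0 p.2 r) (q.1, cons0 q.2 r)
    rw [Finset.sum_congr rfl fun r _ => lhs_eq r]
    exact (Fintype.sum_prod_type
        (f := fun rj : (Fin n → Fin d) × Fin d =>
          ρ' (p.1, cons0 p.2 (Fin.snoc rj.1 rj.2)) (q.1, cons0 q.2 (Fin.snoc rj.1 rj.2)))).symm.trans
      (Fintype.sum_equiv (snocEquiv' d n) _ _ (fun _ => rfl))
end

section
/- The scaled partition matrix satisfies P†·P = I (the identity matrix indexed by J_k), and consequently A†(I) = I, i.e., the adjoint map A† sends the identity matrix indexed by (Fin d_a) × (Fin d) to the identity matrix indexed by (Fin d_a) × J_k. -/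
open Matrix
open scoped Kronecker ComplexOrder

noncomputable section

instance monoDecidable {k d : ℕ} : DecidablePred (Monotone : (Fin k → Fin d) → Prop) :=
  fun f => decidable_of_iff (∀ a b : Fin k, a ≤ b → f a ≤ f b) Iff.rfl

/-- `Jk d k` : nondecreasing sequences of length `k` from `{0, …, d-1}`. -/
abbrev Jk (d k : ℕ) := {f : Fin k → Fin d // Monotone f}

/-- the nondecreasing rearrangement of a sequence. -/
def sortTuple {d k : ℕ} (i : Fin k → Fin d) : Jk d k :=
  ⟨i ∘ Tuple.sort i, Tuple.monotone_sort i⟩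

/-- `permCount j` : the number of sequences whose sorted rearrangement is `j`. -/
def permCount {d k : ℕ} (j : Jk d k) : ℕ :=
  (Finset.univ.filter fun i : Fin k → Fin d => sortTuple i = j).card

/-- The scaled partition matrix `P`. -/
def Pmat (d k : ℕ) : Matrix (Fin k → Fin d) (Jk d k) ℂ :=
  fun i j => if sortTuple i = j then (((permCount j : ℝ) ^ (-(1/2) : ℝ) : ℝ) : ℂ) else 0

/-- The operator `A`. -/
def Amap (da d k : ℕ) (X : Matrix (Fin da × Jk d k) (Fin da × Jk d k) ℂ) :
    Matrix (Fin da × Fin d) (Fin da × Fin d) ℂ :=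
  PTr da d k (((1 : Matrix (Fin da) (Fin da) ℂ) ⊗ₖ Pmat d k) * X *
    ((1 : Matrix (Fin da) (Fin da) ℂ) ⊗ₖ Pmat d k)ᴴ)

/-- The extension operator `E` : `E(W) ((a,i),(a',i')) = W ((a, i 0), (a', i' 0))` when
`i` and `i'` agree on all later coordinates, and `0` otherwise. -/
def Emat (da d k : ℕ) (hk : 0 < k)
    (W : Matrix (Fin da × Fin d) (Fin da × Fin d) ℂ) :
    Matrix (Fin da × (Fin k → Fin d)) (Fin da × (Fin k → Fin d)) ℂ :=
  fun p q =>
    if ∀ s : Fin (k - 1),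
        p.2 ⟨(s : ℕ) + 1, by have := s.isLt; omega⟩ =
          q.2 ⟨(s : ℕ) + 1, by have := s.isLt; omega⟩
    then W (p.1, p.2 ⟨0, hk⟩) (q.1, q.2 ⟨0, hk⟩) else 0

/-- The adjoint operator `A†`. -/
def Adag (da d k : ℕ) (hk : 0 < k)
    (W : Matrix (Fin da × Fin d) (Fin da × Fin d) ℂ) :
    Matrix (Fin da × Jk d k) (Fin da × Jk d k) ℂ :=
  ((1 : Matrix (Fin da) (Fin da) ℂ) ⊗ₖ Pmat d k)ᴴ * Emat da d k hk W *
    ((1 : Matrix (Fin da) (Fin da) ℂ) ⊗ₖ Pmat d k)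

/-- Partial transpose in the second index. -/
def pTransp {m α : Type*} (M : Matrix (m × α) (m × α) ℂ) : Matrix (m × α) (m × α) ℂ :=
  fun p q => M (p.1, q.2) (q.1, p.2)

/-- Squared Frobenius norm. -/
def frobSq {α β : Type*} [Fintype α] [Fintype β] (M : Matrix α β ℂ) : ℝ :=
  ∑ p, ∑ q, ‖M p q‖ ^ 2

/-- Largest eigenvalue of a Hermitian matrix. -/
def lamMax {n : Type*} [Fintype n] [DecidableEq n]
    {M : Matrix n n ℂ} (hM : M.IsHermitian) : ℝ :=
  ⨆ i, hM.eigenvalues i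

end


lemma sortTuple_self {d k : ℕ} (j : Jk d k) : sortTuple j.1 = j := by
  apply Subtype.ext
  show j.1 ∘ ⇑(Tuple.sort j.1) = j.1
  rw [(Tuple.sort_eq_refl_iff_monotone).mpr j.2]
  rfl

lemma permCount_pos {d k : ℕ} (j : Jk d k) : 0 < permCount j := by
  apply Finset.card_pos.mpr
  exact ⟨j.1, by simp [sortTuple_self]⟩

lemma conjT_kron {l m n p : Type*} [Fintype l] [Fintype m] [Fintype n] [Fintype p]
    (A : Matrix l m ℂ) (B : Matrix n p ℂ) :
    (A ⊗ₖ B)ᴴ = Aᴴ ⊗ₖ Bᴴ := by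
  ext ⟨a,b⟩ ⟨c,e⟩
  simp [Matrix.conjTranspose_apply, Matrix.kroneckerMap_apply, _root_.map_mul]

lemma PhP (d k : ℕ) : (Pmat d k)ᴴ * Pmat d k = 1 := by
  ext j j'
  simp only [Matrix.mul_apply, Matrix.conjTranspose_apply, Pmat]
  have hterm : ∀ i : Fin k → Fin d,
      star (if sortTuple i = j then (((permCount j : ℝ) ^ (-(1/2) : ℝ) : ℝ) : ℂ) else 0) *
        (if sortTuple i = j' then (((permCount j' : ℝ) ^ (-(1/2) : ℝ) : ℝ) : ℂ) else 0) =
      if sortTuple i = j ∧ sortTuple i = j' then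
        ((((permCount j : ℝ) ^ (-(1/2) : ℝ) : ℝ) : ℂ) *
          (((permCount j' : ℝ) ^ (-(1/2) : ℝ) : ℝ) : ℂ)) else 0 := by
    intro i
    by_cases h1 : sortTuple i = j <;> by_cases h2 : sortTuple i = j'
    · simp [h1, h2, RCLike.star_def, Complex.conj_ofReal]
    · simp [h1, h2, show ¬ j = j' from fun h => h2 (h ▸ h1)]
    · simp [h1, h2, show ¬ j' = j from fun h => h1 (h ▸ h2)]
    · simp [h1, h2]
  rw [Finset.sum_congr rfl fun i _ => hterm i]
  by_cases h : j = j'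
  · subst h
    rw [Matrix.one_apply_eq]
    simp only [and_self]
    rw [← Finset.sum_filter]
    rw [Finset.sum_const]
    have hn : (0:ℝ) < (permCount j : ℝ) := by exact_mod_cast permCount_pos j
    have key : (((permCount j : ℝ) ^ (-(1/2) : ℝ) : ℝ) * ((permCount j : ℝ) ^ (-(1/2) : ℝ) : ℝ))
        = ((permCount j : ℝ))⁻¹ := by
      rw [← Real.rpow_add hn]
      norm_num
      exact Real.rpow_neg_one _
    show (permCount j : ℕ) • _ = (1:ℂ)
    rw [nsmul_eq_mul, ← Complex.ofReal_mul, key]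
    push_cast
    rw [mul_inv_cancel₀]
    exact_mod_cast hn.ne'
  · rw [Matrix.one_apply_ne h, Finset.sum_eq_zero]
    intro i _
    rw [if_neg]
    rintro ⟨h1, h2⟩
    exact h (h1 ▸ h2)

lemma Emat_one (da d k : ℕ) (hk : 0 < k) :
    Emat da d k hk (1 : Matrix (Fin da × Fin d) (Fin da × Fin d) ℂ) = 1 := by
  ext ⟨a, i⟩ ⟨a', i'⟩
  simp only [Emat, Matrix.one_apply, Prod.mk.injEq]
  by_cases hii : i = i'
  · subst hii
    simp
  · conv_rhs => rw [if_neg (show ¬(a = a' ∧ i = i') by tauto)]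
    split_ifs with h1 h2
    · exfalso
      apply hii
      funext s
      rcases Nat.eq_zero_or_pos s.1 with h0 | h0
      · have hs : s = ⟨0, hk⟩ := Fin.ext h0
        rw [hs]
        exact h2.2
      · have hlt : s.1 - 1 < k - 1 := by have := s.isLt; omega
        have := h1 ⟨s.1 - 1, hlt⟩
        have hs : (⟨s.1 - 1 + 1, by omega⟩ : Fin k) = s := Fin.ext (by simp; omega)
        rwa [hs] at this
    · rfl
    · rfl

theorem stmt6 (da d k : ℕ) (hda : 0 < da) (hd : 0 < d) (hk : 0 < k) :
    (Pmat d k)ᴴ * Pmat d k = 1 ∧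
    Adag da d k hk (1 : Matrix (Fin da × Fin d) (Fin da × Fin d) ℂ) = 1 := by
  refine ⟨PhP d k, ?_⟩
  unfold Adag
  rw [Emat_one, Matrix.mul_one, conjT_kron, ← Matrix.mul_kronecker_mul,
    Matrix.conjTranspose_one, one_mul, PhP, Matrix.one_kronecker_one]
end
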